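/- Define A_3(θ) = −(2π/3)(1 + sin³(θ/2)) + π( (1/12)(9cos(θ/2) − cos(3θ/2)) + (1/6)(9sin(θ/2) + sin(3θ/2)) ) for 0 ≤ θ ≤ π. Then ∫₀^π A_3(θ) sin(θ) dθ = 4π/3. -/

import Mathlib

open Real

theorem stmt_9 :
    (∫ θ in (0:ℝ)..π,
      (-(2*π/3) * (1 + Real.sin (θ/2) ^ 3)
        + π * ((1/12) * (9 * Real.cos (θ/2) - Real.cos (3*θ/2))
             + (1/6) * (9 * Real.sin (θ/2) + Real.sin (3*θ/2)))) * Real.sin θ)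
      = 4*π/3 := by
  have key : ∀ θ ∈ Set.uIcc (0:ℝ) π,
      HasDerivAt (fun θ : ℝ => 4*π*((1/3)*Real.cos (θ/2)^2 - (1/3)*Real.cos (θ/2)^3
          + (1/15)*Real.cos (θ/2)^5 + (2/3)*Real.sin (θ/2)^3 - (4/15)*Real.sin (θ/2)^5))
        ((-(2*π/3) * (1 + Real.sin (θ/2) ^ 3)
        + π * ((1/12) * (9 * Real.cos (θ/2) - Real.cos (3*θ/2))
             + (1/6) * (9 * Real.sin (θ/2) + Real.sin (3*θ/2)))) * Real.sin θ) θ := by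
    intro θ _
    have h1 : HasDerivAt (fun x : ℝ => x/2) (1/2) θ := (hasDerivAt_id θ).div_const 2
    have hc : HasDerivAt (fun x : ℝ => Real.cos (x/2)) (-Real.sin (θ/2) * (1/2)) θ :=
      by have := (Real.hasDerivAt_cos (θ/2)).comp θ h1; exact this
    have hs : HasDerivAt (fun x : ℝ => Real.sin (x/2)) (Real.cos (θ/2) * (1/2)) θ :=
      by have := (Real.hasDerivAt_sin (θ/2)).comp θ h1; exact this
    have H := (((((((hc.pow 2).const_mul ((1:ℝ)/3)).sub ((hc.pow 3).const_mul ((1:ℝ)/3))).add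
      ((hc.pow 5).const_mul ((1:ℝ)/15))).add
      ((hs.pow 3).const_mul ((2:ℝ)/3))).sub
      ((hs.pow 5).const_mul ((4:ℝ)/15)))).const_mul (4*π)
    convert H using 1
    · rfl
    · rfl
    · funext x; simp only [Pi.add_apply, Pi.sub_apply, Pi.pow_apply]
    have hsin : Real.sin θ = 2 * Real.sin (θ/2) * Real.cos (θ/2) := by
      have := Real.sin_two_mul (θ/2)
      rw [show 2*(θ/2) = θ by ring] at this
      linarith
    have h3c : Real.cos (3*θ/2) = 4*Real.cos (θ/2)^3 - 3*Real.cos (θ/2) := by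
      have := Real.cos_three_mul (θ/2)
      rw [show 3*(θ/2) = 3*θ/2 by ring] at this
      linarith
    have h3s : Real.sin (3*θ/2) = 3*Real.sin (θ/2) - 4*Real.sin (θ/2)^3 := by
      have := Real.sin_three_mul (θ/2)
      rw [show 3*(θ/2) = 3*θ/2 by ring] at this
      linarith
    rw [hsin, h3c, h3s]; ring
  have hcont : Continuous fun θ : ℝ =>
      (-(2*π/3) * (1 + Real.sin (θ/2) ^ 3)
        + π * ((1/12) * (9 * Real.cos (θ/2) - Real.cos (3*θ/2))
             + (1/6) * (9 * Real.sin (θ/2) + Real.sin (3*θ/2)))) * Real.sin θ := by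
    fun_prop
  rw [intervalIntegral.integral_eq_sub_of_hasDerivAt key (hcont.intervalIntegrable _ _)]
  norm_num [Real.cos_pi_div_two, Real.sin_pi_div_two]
  ring
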